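/- Let (G₂, G₁, ∂) be a pre-crossed module and V ⊆ G₂ a generating set of G₂ that is invariant under the G₁-action. Then the Peiffer subgroup P equals the normal closure in G₂ of the set of Peiffer commutators ⟨a,b⟩ with a, b ∈ V. -/
import Mathlib


/-- Let `(G₂, G₁, d)` be a pre-crossed module and `V ⊆ G₂` a generating set of `G₂`
invariant under the `G₁`-action.  Then the Peiffer subgroup (the subgroup generated
by all Peiffer commutators `⟨a,b⟩ = a b a⁻¹ (^{d(a)}b)⁻¹`) equals the normal closure
in `G₂` of the set of Peiffer commutators `⟨a,b⟩` with `a, b ∈ V`. -/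
theorem stmt10 (G₁ G₂ : Type) [Group G₁] [Group G₂]
    (φ : G₁ →* MulAut G₂) (d : G₂ →* G₁)
    (cm1 : ∀ (g₁ : G₁) (g₂ : G₂), d (φ g₁ g₂) = g₁ * d g₂ * g₁⁻¹)
    (V : Set G₂) (hV : Subgroup.closure V = ⊤)
    (hVinv : ∀ g : G₁, ∀ v ∈ V, φ g v ∈ V) :
    Subgroup.closure {z : G₂ | ∃ a b : G₂, z = a * b * a⁻¹ * (φ (d a) b)⁻¹}
      = Subgroup.normalClosure
          {z : G₂ | ∃ a ∈ V, ∃ b ∈ V, z = a * b * a⁻¹ * (φ (d a) b)⁻¹} := by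
  set T : Set G₂ := {z : G₂ | ∃ a b : G₂, z = a * b * a⁻¹ * (φ (d a) b)⁻¹} with hT
  set S : Set G₂ := {z : G₂ | ∃ a ∈ V, ∃ b ∈ V, z = a * b * a⁻¹ * (φ (d a) b)⁻¹} with hS
  set N := Subgroup.normalClosure S with hN
  -- equivariance of Peiffer commutators under the G₁-action
  have equiv : ∀ (g : G₁) (a b : G₂),
      φ g (a * b * a⁻¹ * (φ (d a) b)⁻¹) =
      (φ g a) * (φ g b) * (φ g a)⁻¹ * (φ (d (φ g a)) (φ g b))⁻¹ := by
    intro g a b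
    simp [cm1, map_mul, map_inv, MulAut.mul_apply, MulAut.inv_def]
  -- N is invariant under the G₁-action
  have hNinv : ∀ (g : G₁) (x : G₂), x ∈ N → φ g x ∈ N := by
    intro g x hx
    have h1 : N.map ((φ g : G₂ ≃* G₂) : G₂ →* G₂) ≤ N := by
      rw [hN, Subgroup.map_normalClosure S _ (φ g).surjective]
      apply Subgroup.normalClosure_mono
      rintro _ ⟨z, hz, rfl⟩
      obtain ⟨a, ha, b, hb, rfl⟩ := hz
      exact ⟨φ g a, hVinv g a ha, φ g b, hVinv g b hb, equiv g a b⟩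
    exact h1 ⟨x, hx, rfl⟩
  -- algebraic identities
  have mulb : ∀ a b c : G₂, a * (b * c) * a⁻¹ * (φ (d a) (b * c))⁻¹ =
      (a * b * a⁻¹ * (φ (d a) b)⁻¹) *
        ((φ (d a) b) * (a * c * a⁻¹ * (φ (d a) c)⁻¹) * (φ (d a) b)⁻¹) := by
    intro a b c; simp only [map_mul]; group
  have invb : ∀ a b : G₂, a * b⁻¹ * a⁻¹ * (φ (d a) b⁻¹)⁻¹ =
      (φ (d a) b)⁻¹ * (a * b * a⁻¹ * (φ (d a) b)⁻¹)⁻¹ * (φ (d a) b) := by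
    intro a b; simp only [map_inv]; group
  have mula : ∀ a b c : G₂, (a * b) * c * (a * b)⁻¹ * (φ (d (a * b)) c)⁻¹ =
      (a * (b * c * b⁻¹) * a⁻¹ * (φ (d a) (b * c * b⁻¹))⁻¹) *
        (φ (d a) (b * c * b⁻¹ * (φ (d b) c)⁻¹)) := by
    intro a b c; simp only [map_mul, map_inv, MulAut.mul_apply]; group
  have inva : ∀ a c : G₂, a⁻¹ * c * (a⁻¹)⁻¹ * (φ (d a⁻¹) c)⁻¹ =
      φ (d a⁻¹) ((a * (a⁻¹ * c * a) * a⁻¹ * (φ (d a) (a⁻¹ * c * a))⁻¹)⁻¹) := by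
    intro a c
    simp only [map_mul, map_inv, MulAut.mul_apply, MulAut.inv_def,
      MulEquiv.symm_apply_apply]
    group
  -- every Peiffer commutator lies in N
  have inner : ∀ a : G₂, (∀ v ∈ V, a * v * a⁻¹ * (φ (d a) v)⁻¹ ∈ N) →
      ∀ b : G₂, a * b * a⁻¹ * (φ (d a) b)⁻¹ ∈ N := by
    intro a hbase b
    have hb : b ∈ Subgroup.closure V := hV ▸ Subgroup.mem_top b
    induction hb using Subgroup.closure_induction with
    | mem v hv => exact hbase v hv
    | one => simpa using N.one_mem
    | mul x y _ _ hx hy =>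
        rw [mulb]
        exact N.mul_mem hx (Subgroup.normalClosure_normal.conj_mem _ hy _)
    | inv x _ hx =>
        rw [invb]
        simpa using Subgroup.normalClosure_normal.conj_mem _ (N.inv_mem hx) (φ (d a) x)⁻¹
  have key : ∀ a b : G₂, a * b * a⁻¹ * (φ (d a) b)⁻¹ ∈ N := by
    intro a
    have ha : a ∈ Subgroup.closure V := hV ▸ Subgroup.mem_top a
    induction ha using Subgroup.closure_induction with
    | mem v hv =>
        exact inner v (fun w hw => Subgroup.subset_normalClosure ⟨v, hv, w, hw, rfl⟩)
    | one => intro b; simpa using N.one_mem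
    | mul x y _ _ hx hy =>
        intro c
        rw [mula]
        exact N.mul_mem (hx _) (hNinv (d x) _ (hy c))
    | inv x _ hx =>
        intro c
        rw [inva]
        exact hNinv _ _ (N.inv_mem (hx _))
  -- the Peiffer subgroup is invariant under the G₁-action
  have hPinv : ∀ (g : G₁) (x : G₂), x ∈ Subgroup.closure T → φ g x ∈ Subgroup.closure T := by
    intro g x hx
    have h1 : (Subgroup.closure T).map ((φ g : G₂ ≃* G₂) : G₂ →* G₂) ≤ Subgroup.closure T := by
      rw [MonoidHom.map_closure]
      apply Subgroup.closure_mono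
      rintro _ ⟨z, ⟨a, b, rfl⟩, rfl⟩
      exact ⟨φ g a, φ g b, equiv g a b⟩
    exact h1 ⟨x, hx, rfl⟩
  -- the Peiffer subgroup is normal
  have hTnorm : (Subgroup.closure T).Normal := by
    constructor
    intro n hn g
    have h1 : g * n * g⁻¹ * (φ (d g) n)⁻¹ ∈ Subgroup.closure T :=
      Subgroup.subset_closure ⟨g, n, rfl⟩
    have h2 : φ (d g) n ∈ Subgroup.closure T := hPinv (d g) n hn
    simpa using mul_mem h1 h2
  refine le_antisymm ?_ ?_
  · rw [Subgroup.closure_le]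
    rintro z ⟨a, b, rfl⟩
    exact key a b
  · exact @Subgroup.normalClosure_le_normal _ _ _ _ hTnorm
      (fun z hz => by obtain ⟨a, _, b, _, rfl⟩ := hz; exact Subgroup.subset_closure ⟨a, b, rfl⟩)
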